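/- Let {ν_n}_{n≥1} be a sequence of parametric b-measures on ℝ^N with respect to {ω_j}_{j≥1} such that the set {ν_n : n ≥ 1} ∪ {ν₀} has bounded l-bounds (for each j there is c_j > 0 and a choice of l-bounds l_j^n with l_j^n([t,t+1]) ≤ c_j for all t ∈ ℝ and n ≥ 0). Let D be a countable dense subset of ℝ^N and Θ = {θ_j^I} a suitable set of moduli of continuity. If ν_n converges to the parametric b-measure ν₀ in σ_D, i.e., (ν_n)_y(I) → (ν₀)_y(I) for every y ∈ D and every compact interval I with rational endpoints, then ν_n converges to ν₀ in σ_Θ, i.e., for every such interval I and every j ∈ ℕ, lim_{n→∞} sup_{y(·)∈𝒦_j^I} |∫_I d(ν_n)_{y(s)} − ∫_I d(ν₀)_{y(s)}| = 0. -/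

import Mathlib

open MeasureTheory Set Filter Topology

/-- A (continuous real) b-measure: a set function on the bounded Borel subsets of `ℝ`
which vanishes on `∅`, is countably additive over countable pairwise disjoint families
of bounded Borel sets with bounded union, and vanishes on singletons. -/
structure IsBMeasure (μ : Set ℝ → ℝ) : Prop where
  empty : μ ∅ = 0
  countably_additive : ∀ A : ℕ → Set ℝ, (∀ n, MeasurableSet (A n)) →
    (∀ n, Bornology.IsBounded (A n)) → Pairwise (Function.onFun Disjoint A) →
    Bornology.IsBounded (⋃ n, A n) →
    HasSum (fun n => μ (A n)) (μ (⋃ n, A n))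
  singleton : ∀ t : ℝ, μ {t} = 0

/-- A locally finite atomless Borel measure on `ℝ`. -/
def GoodMeasure (m : Measure ℝ) : Prop :=
  IsLocallyFiniteMeasure m ∧ ∀ t : ℝ, m {t} = 0

/-- `P` is a finite Borel partition of `A`. -/
def IsBorelPartition (A : Set ℝ) {n : ℕ} (P : Fin n → Set ℝ) : Prop :=
  (∀ i, MeasurableSet (P i)) ∧ Pairwise (Function.onFun Disjoint P) ∧ (⋃ i, P i) = A

/-- `|μ| ≤ m` : total-variation bound of the set function `μ` by the measure `m`,
expressed through finite Borel partitions of bounded Borel sets. -/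
def TVLE (μ : Set ℝ → ℝ) (m : Measure ℝ) : Prop :=
  ∀ A : Set ℝ, Bornology.IsBounded A → MeasurableSet A →
    ∀ (n : ℕ) (P : Fin n → Set ℝ), IsBorelPartition A P →
      ∑ i, |μ (P i)| ≤ (m A).toReal

/-- Partition-sum bound `Σ |μ₁(Aᵢ) - μ₂(Aᵢ)| ≤ c · l(A)` for the difference of two
set functions, over finite Borel partitions of bounded Borel sets. -/
def DiffLE (μ₁ μ₂ : Set ℝ → ℝ) (c : ℝ) (l : Measure ℝ) : Prop :=
  ∀ A : Set ℝ, Bornology.IsBounded A → MeasurableSet A →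
    ∀ (n : ℕ) (P : Fin n → Set ℝ), IsBorelPartition A P →
      ∑ i, |μ₁ (P i) - μ₂ (P i)| ≤ c * (l A).toReal

variable {E : Type*} [NormedAddCommGroup E]

/-- `m` is an m-bound of `ν` on the closed ball of radius `j`. -/
def HasMBound (ν : E → Set ℝ → ℝ) (j : ℕ) (m : Measure ℝ) : Prop :=
  GoodMeasure m ∧ ∀ y : E, ‖y‖ ≤ (j : ℝ) → TVLE (ν y) m

/-- `l` is an l-bound of `ν` on the closed ball of radius `j`, for the modulus `ω`. -/
def HasLBound (ω : ℝ → ℝ) (ν : E → Set ℝ → ℝ) (j : ℕ) (l : Measure ℝ) : Prop :=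
  GoodMeasure l ∧ ∀ y₁ y₂ : E, ‖y₁‖ ≤ (j : ℝ) → ‖y₂‖ ≤ (j : ℝ) →
    DiffLE (ν y₁) (ν y₂) (ω ‖y₁ - y₂‖) l

/-- A non-decreasing family of moduli of continuity `{ω_j}`. -/
structure IsModulusFamily (ω : ℕ → ℝ → ℝ) : Prop where
  continuousOn : ∀ j, ContinuousOn (ω j) (Ici 0)
  monotoneOn : ∀ j, MonotoneOn (ω j) (Ici 0)
  map_zero : ∀ j, ω j 0 = 0
  nonneg : ∀ j x, 0 ≤ x → 0 ≤ ω j x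
  mono_index : ∀ j x, 0 ≤ x → ω j x ≤ ω (j + 1) x

/-- A parametric b-measure on `E` with respect to the family of moduli `ω`. -/
def IsParamBMeasure (ω : ℕ → ℝ → ℝ) (ν : E → Set ℝ → ℝ) : Prop :=
  (∀ y, IsBMeasure (ν y)) ∧
    ∀ j : ℕ, 1 ≤ j → ∃ m l : Measure ℝ, HasMBound ν j m ∧ HasLBound (ω j) ν j l

/-- A tagged partition of `[a,b]`. -/
structure TaggedPartition (a b : ℝ) where
  k : ℕ
  k_pos : 0 < k
  t : ℕ → ℝ
  tag : ℕ → ℝ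
  left : t 0 = a
  right : t k = b
  lt : ∀ i < k, t i < t (i + 1)
  tag_mem : ∀ i < k, tag i ∈ Set.Icc (t i) (t (i + 1))

/-- The mesh of the tagged partition is `< δ`. -/
def TaggedPartition.MeshLT {a b : ℝ} (P : TaggedPartition a b) (δ : ℝ) : Prop :=
  ∀ i < P.k, P.t (i + 1) - P.t i < δ

/-- The Riemann sum of the parametric b-measure `ν` along the curve `y` over the
tagged partition `P`. -/
def RiemannSum (ν : E → Set ℝ → ℝ) (y : ℝ → E) {a b : ℝ} (P : TaggedPartition a b) : ℝ :=
  ∑ i ∈ Finset.range P.k, ν (y (P.tag i)) (Set.Icc (P.t i) (P.t (i + 1)))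

/-- `L = ∫_a^b dν_{y(s)}` : `L` is the limit of the Riemann sums of `ν` along `y`
over tagged partitions of `[a,b]` as the mesh tends to `0`. -/
def IsCurveIntegral (ν : E → Set ℝ → ℝ) (y : ℝ → E) (a b : ℝ) (L : ℝ) : Prop :=
  ∀ ε > 0, ∃ δ > 0, ∀ P : TaggedPartition a b, P.MeshLT δ → |L - RiemannSum ν y P| < ε

/-- A suitable set of moduli of continuity `Θ = {θ_j^{[q₁,q₂]}}`. -/
structure IsSuitableModuli (Θ : ℕ → ℚ → ℚ → ℝ → ℝ) : Prop where
  continuousOn : ∀ (j : ℕ) (q₁ q₂ : ℚ), q₁ < q₂ → ContinuousOn (Θ j q₁ q₂) (Ici 0)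
  monotoneOn : ∀ (j : ℕ) (q₁ q₂ : ℚ), q₁ < q₂ → MonotoneOn (Θ j q₁ q₂) (Ici 0)
  map_zero : ∀ (j : ℕ) (q₁ q₂ : ℚ), q₁ < q₂ → Θ j q₁ q₂ 0 = 0
  nonneg : ∀ (j : ℕ) (q₁ q₂ : ℚ) (x : ℝ), q₁ < q₂ → 0 ≤ x → 0 ≤ Θ j q₁ q₂ x
  mono : ∀ (j₁ j₂ : ℕ) (q₁ q₂ p₁ p₂ : ℚ), j₁ ≤ j₂ → q₁ ≤ p₁ → p₁ < p₂ → p₂ ≤ q₂ →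
    ∀ x : ℝ, 0 ≤ x → Θ j₁ p₁ p₂ x ≤ Θ j₂ q₁ q₂ x

/-- The set `𝒦_j^I` of continuous functions `y : I → E`, `I = [q₁,q₂]`, bounded by `j`
and admitting `θ_j^I` as modulus of continuity. -/
def KSet (E : Type*) [NormedAddCommGroup E] (Θ : ℕ → ℚ → ℚ → ℝ → ℝ)
    (j : ℕ) (q₁ q₂ : ℚ) : Set (ℝ → E) :=
  {y | ContinuousOn y (Set.Icc (q₁ : ℝ) (q₂ : ℝ)) ∧
    (∀ t ∈ Set.Icc (q₁ : ℝ) (q₂ : ℝ), ‖y t‖ ≤ (j : ℝ)) ∧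
    ∀ t₁ ∈ Set.Icc (q₁ : ℝ) (q₂ : ℝ), ∀ t₂ ∈ Set.Icc (q₁ : ℝ) (q₂ : ℝ),
      ‖y t₁ - y t₂‖ ≤ Θ j q₁ q₂ |t₁ - t₂|}

/-- Convergence `ν_n → ν₀` in the topology `σ_Θ` : the integrals along curves of
`𝒦_j^I` converge uniformly, for every `j` and every compact interval `I` with
rational endpoints. -/
def SigmaThetaTendsto {E : Type*} [NormedAddCommGroup E] (Θ : ℕ → ℚ → ℚ → ℝ → ℝ)
    (ν : ℕ → E → Set ℝ → ℝ) (ν₀ : E → Set ℝ → ℝ) : Prop :=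
  ∀ (j : ℕ) (q₁ q₂ : ℚ), q₁ < q₂ → ∀ ε > 0, ∃ n₀ : ℕ, ∀ n ≥ n₀,
    ∀ y ∈ KSet E Θ j q₁ q₂, ∀ L L₀ : ℝ,
      IsCurveIntegral (ν n) y (q₁ : ℝ) (q₂ : ℝ) L →
      IsCurveIntegral ν₀ y (q₁ : ℝ) (q₂ : ℝ) L₀ → |L - L₀| < ε

/-- The time-translate `ν·t` of a parametric b-measure: `(ν·t)_y(A) = ν_y(A + t)`. -/
def BTranslate (ν : E → Set ℝ → ℝ) (t : ℝ) : E → Set ℝ → ℝ :=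
  fun y A => ν y ((fun s => s + t) '' A)

/-- The time-translate `m·t` of a Borel measure: `(m·t)(A) = m(A + t)`. -/
noncomputable def MTranslate (m : Measure ℝ) (t : ℝ) : Measure ℝ :=
  Measure.map (fun s => s - t) m

/-- An N-dimensional parametric b-measure on `E` with common m-bounds `m j` and
common Lipschitz l-bounds `l j`. -/
def IsNDimParamBMeasure {M : ℕ} (νbar : Fin M → E → Set ℝ → ℝ)
    (m l : ℕ → Measure ℝ) : Prop :=
  (∀ i y, IsBMeasure (νbar i y)) ∧
    ∀ j : ℕ, 1 ≤ j → GoodMeasure (m j) ∧ GoodMeasure (l j) ∧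
      (∀ i, ∀ y : E, ‖y‖ ≤ (j : ℝ) → TVLE (νbar i y) (m j)) ∧
      (∀ i, ∀ y₁ y₂ : E, ‖y₁‖ ≤ (j : ℝ) → ‖y₂‖ ≤ (j : ℝ) →
        DiffLE (νbar i y₁) (νbar i y₂) ‖y₁ - y₂‖ (l j))

/-- The oriented curve integral: `∫_b^a := -∫_a^b`. -/
def IsSignedCurveIntegral (ν : E → Set ℝ → ℝ) (y : ℝ → E) (a b : ℝ) (L : ℝ) : Prop :=
  (a ≤ b ∧ IsCurveIntegral ν y a b L) ∨ (b < a ∧ IsCurveIntegral ν y b a (-L))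

/-- `y` is a solution on `S` of the Cauchy problem `y' = ν̄_y`, `y(t₀) = y₀`, for the
N-dimensional parametric b-measure `ν̄`: componentwise,
`y_i(t) = y_{0,i} + ∫_{t₀}^t dν^i_{y(s)}`. -/
def IsSolutionOn {M : ℕ} (νbar : Fin M → EuclideanSpace ℝ (Fin M) → Set ℝ → ℝ)
    (t₀ : ℝ) (y₀ : EuclideanSpace ℝ (Fin M)) (S : Set ℝ)
    (y : ℝ → EuclideanSpace ℝ (Fin M)) : Prop :=
  t₀ ∈ S ∧ y t₀ = y₀ ∧ ContinuousOn y S ∧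
    ∀ t ∈ S, ∀ i : Fin M, IsSignedCurveIntegral (νbar i) y t₀ t (y t i - y₀ i)

/-- `y` is the maximal (noncontinuable) solution, defined on the open interval `S`:
every solution on an interval containing `t₀` is a restriction of `y`. -/
def IsMaximalSolution {M : ℕ} (νbar : Fin M → EuclideanSpace ℝ (Fin M) → Set ℝ → ℝ)
    (t₀ : ℝ) (y₀ : EuclideanSpace ℝ (Fin M)) (S : Set ℝ)
    (y : ℝ → EuclideanSpace ℝ (Fin M)) : Prop :=
  IsSolutionOn νbar t₀ y₀ S y ∧ IsOpen S ∧ S.OrdConnected ∧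
    ∀ S' : Set ℝ, S'.OrdConnected → ∀ z, IsSolutionOn νbar t₀ y₀ S' z →
      S' ⊆ S ∧ Set.EqOn z y S'



lemma bmeasure_union {μ : Set ℝ → ℝ} (h : IsBMeasure μ) {A B : Set ℝ}
    (hA : MeasurableSet A) (hB : MeasurableSet B)
    (hAb : Bornology.IsBounded A) (hBb : Bornology.IsBounded B)
    (hd : Disjoint A B) : μ (A ∪ B) = μ A + μ B := by
  classical
  set f : ℕ → Set ℝ := fun n => if n = 0 then A else if n = 1 then B else ∅ with hf
  have hempty : ∀ n : ℕ, n ≠ 0 → n ≠ 1 → f n = ∅ := by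
    intro n h0 h1; simp [hf, h0, h1]
  have hU : (⋃ n, f n) = A ∪ B := by
    apply subset_antisymm
    · apply Set.iUnion_subset
      intro n
      rcases eq_or_ne n 0 with rfl | h0
      · simp [hf]
      rcases eq_or_ne n 1 with rfl | h1
      · simp [hf]
      · simp [hempty n h0 h1]
    · intro x hx
      rcases hx with hx | hx
      · exact Set.mem_iUnion.2 ⟨0, by simpa [hf] using hx⟩
      · exact Set.mem_iUnion.2 ⟨1, by simpa [hf] using hx⟩
  have hmeas : ∀ n, MeasurableSet (f n) := by
    intro n
    rcases eq_or_ne n 0 with rfl | h0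
    · simpa [hf] using hA
    rcases eq_or_ne n 1 with rfl | h1
    · simpa [hf] using hB
    · simp [hempty n h0 h1]
  have hbd : ∀ n, Bornology.IsBounded (f n) := by
    intro n
    rcases eq_or_ne n 0 with rfl | h0
    · simpa [hf] using hAb
    rcases eq_or_ne n 1 with rfl | h1
    · simpa [hf] using hBb
    · simp [hempty n h0 h1]
  have hpw : Pairwise (Function.onFun Disjoint f) := by
    intro i j hij
    unfold Function.onFun
    rcases eq_or_ne i 0 with rfl | hi0
    · rcases eq_or_ne j 1 with rfl | hj1
      · simpa [hf] using hd
      · simp [hempty j (Ne.symm hij) hj1]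
    rcases eq_or_ne i 1 with rfl | hi1
    · rcases eq_or_ne j 0 with rfl | hj0
      · simpa [hf] using hd.symm
      · simp [hempty j hj0 (Ne.symm hij)]
    · simp [hempty i hi0 hi1]
  have hsum := h.countably_additive f hmeas hbd hpw (by rw [hU]; exact hAb.union hBb)
  have hzero : ∀ n ∉ ({0, 1} : Finset ℕ), μ (f n) = 0 := by
    intro n hn
    simp only [Finset.mem_insert, Finset.mem_singleton] at hn
    push_neg at hn
    rw [hempty n hn.1 hn.2, h.empty]
  have hsum2 : HasSum (fun n => μ (f n)) (∑ n ∈ ({0,1} : Finset ℕ), μ (f n)) :=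
    hasSum_sum_of_ne_finset_zero hzero
  have := hsum.unique hsum2
  rw [hU] at this
  simpa [hf] using this

lemma bmeasure_Icc_add {μ : Set ℝ → ℝ} (h : IsBMeasure μ) {a c b : ℝ}
    (hac : a ≤ c) (hcb : c ≤ b) :
    μ (Set.Icc a b) = μ (Set.Icc a c) + μ (Set.Icc c b) := by
  have h1 : Set.Icc c b = {c} ∪ Set.Ioc c b := by
    ext x
    simp only [Set.mem_Icc, Set.mem_union, Set.mem_singleton_iff, Set.mem_Ioc]
    constructor
    · rintro ⟨hx1, hx2⟩
      rcases eq_or_lt_of_le hx1 with rfl | hlt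
      · exact Or.inl rfl
      · exact Or.inr ⟨hlt, hx2⟩
    · rintro (rfl | ⟨hx1, hx2⟩)
      · exact ⟨le_rfl, hcb⟩
      · exact ⟨hx1.le, hx2⟩
  have h2 : μ (Set.Icc c b) = μ (Set.Ioc c b) := by
    rw [h1, bmeasure_union h (measurableSet_singleton c) measurableSet_Ioc
      Bornology.isBounded_singleton (Metric.isBounded_Ioc _ _)
      (by simp [Set.disjoint_singleton_left])]
    simp [h.singleton]
  have hdisj : Disjoint (Set.Icc a c) (Set.Ioc c b) := by
    rw [Set.disjoint_left]
    rintro x ⟨_, hxc⟩ ⟨hcx, _⟩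
    exact absurd hxc (not_le.2 hcx)
  have h3 : Set.Icc a b = Set.Icc a c ∪ Set.Ioc c b := (Set.Icc_union_Ioc_eq_Icc hac hcb).symm
  rw [h3, bmeasure_union h measurableSet_Icc measurableSet_Ioc (Metric.isBounded_Icc _ _)
    (Metric.isBounded_Ioc _ _) hdisj, h2]

lemma chain_mono (t : ℕ → ℝ) (m : ℕ) (h : ∀ i < m, t i ≤ t (i + 1)) :
    ∀ p q, p ≤ q → q ≤ m → t p ≤ t q := by
  intro p q hpq
  refine Nat.le_induction (fun _ => le_rfl) (fun q hq ih hqm => ?_) q hpq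
  exact le_trans (ih (by omega)) (h q (by omega))

lemma bmeasure_chain {μ : Set ℝ → ℝ} (h : IsBMeasure μ) (t : ℕ → ℝ) (m : ℕ)
    (hm : ∀ i < m, t i ≤ t (i + 1)) :
    ∑ i ∈ Finset.range m, μ (Set.Icc (t i) (t (i + 1))) = μ (Set.Icc (t 0) (t m)) := by
  induction m with
  | zero => simp [Set.Icc_self, h.singleton]
  | succ n ih =>
    rw [Finset.sum_range_succ, ih (fun i hi => hm i (by omega))]
    have h0n : t 0 ≤ t n := chain_mono t (n+1) hm 0 n (by omega) (by omega)
    rw [bmeasure_Icc_add h h0n (hm n (by omega))]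


lemma diffLE_single {μ₁ μ₂ : Set ℝ → ℝ} {c : ℝ} {l : Measure ℝ} (h : DiffLE μ₁ μ₂ c l)
    {A : Set ℝ} (hb : Bornology.IsBounded A) (hm : MeasurableSet A) :
    |μ₁ A - μ₂ A| ≤ c * (l A).toReal := by
  have hp : IsBorelPartition A (fun _ : Fin 1 => A) := by
    refine ⟨fun _ => hm, ?_, by rw [Set.iUnion_const]⟩
    intro i j hij
    exact absurd (Subsingleton.elim i j) hij
  have := h A hb hm 1 (fun _ => A) hp
  simpa using this

lemma chain_mono' (t : ℕ → ℝ) (m : ℕ) (h : ∀ i < m, t i ≤ t (i + 1)) :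
    ∀ p q, p ≤ q → q ≤ m → t p ≤ t q := by
  intro p q hpq
  refine Nat.le_induction (fun _ => le_rfl) (fun q hq ih hqm => ?_) q hpq
  exact le_trans (ih (by omega)) (h q (by omega))

-- L4
lemma sum_measure_Icc_le (l : Measure ℝ) (hatom : ∀ s : ℝ, l {s} = 0) (c : ℝ) (hc : 0 ≤ c)
    (hl : ∀ s : ℝ, l (Set.Icc s (s + 1)) ≤ ENNReal.ofReal c)
    (a b : ℝ) (hab : a < b) (t : ℕ → ℝ) (m : ℕ)
    (hmono : ∀ i < m, t i ≤ t (i + 1))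
    (hsub : ∀ i < m, Set.Icc (t i) (t (i + 1)) ⊆ Set.Icc a b) :
    ∑ i ∈ Finset.range m, (l (Set.Icc (t i) (t (i + 1)))).toReal ≤ c * (⌈b - a⌉₊ : ℝ) := by
  set K := ⌈b - a⌉₊ with hK
  have hK1 : 1 ≤ K := Nat.one_le_iff_ne_zero.2 (by
    rw [hK, ← Nat.pos_iff_ne_zero, Nat.ceil_pos]; linarith)
  -- cover Icc a b by K unit intervals
  have hcover : Set.Icc a b ⊆ ⋃ k ∈ Finset.range K, Set.Icc (a + k) (a + k + 1) := by
    intro x ⟨hx1, hx2⟩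
    have hxa : (0:ℝ) ≤ x - a := by linarith
    set k0 := min ⌊x - a⌋₊ (K - 1) with hk0
    have hk0K : k0 ∈ Finset.range K := Finset.mem_range.2 (by omega)
    refine Set.mem_biUnion hk0K ?_
    constructor
    · have h1 : (k0 : ℝ) ≤ ⌊x - a⌋₊ := by exact_mod_cast Nat.cast_le.2 (min_le_left _ _)
      have h2 : (⌊x - a⌋₊ : ℝ) ≤ x - a := Nat.floor_le hxa
      linarith
    · rcases le_or_gt ⌊x - a⌋₊ (K - 1) with hle | hgt
      · have he : k0 = ⌊x - a⌋₊ := min_eq_left hle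
        have h3 := Nat.lt_floor_add_one (x - a)
        have : (k0:ℝ) = (⌊x - a⌋₊ : ℝ) := by rw [he]
        linarith
      · have hk0e : k0 = K - 1 := min_eq_right (by omega)
        have h2 : x - a ≤ (K : ℝ) := le_trans (by linarith) (Nat.le_ceil _)
        have h4 : (k0 : ℝ) = (K : ℝ) - 1 := by
          rw [hk0e]
          have : (1:ℕ) ≤ K := hK1
          push_cast [Nat.cast_sub this]
          ring
        linarith
  have hIccbd : l (Set.Icc a b) ≤ (K : ℕ∞) * ENNReal.ofReal c := by
    calc l (Set.Icc a b) ≤ l (⋃ k ∈ Finset.range K, Set.Icc (a + k) (a + k + 1)) :=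
          measure_mono hcover
      _ ≤ ∑ k ∈ Finset.range K, l (Set.Icc (a + k) (a + k + 1)) :=
          measure_biUnion_finset_le _ _
      _ ≤ ∑ k ∈ Finset.range K, ENNReal.ofReal c := Finset.sum_le_sum (fun k _ => hl _)
      _ = (K : ℕ∞) * ENNReal.ofReal c := by
          rw [Finset.sum_const, Finset.card_range]; simp [nsmul_eq_mul]
  have hfin : l (Set.Icc a b) ≠ ⊤ :=
    ne_top_of_le_ne_top (ENNReal.mul_ne_top (ENNReal.natCast_ne_top K) ENNReal.ofReal_ne_top)
      hIccbd
  have hIcoeq : ∀ i ∈ Finset.range m, l (Set.Icc (t i) (t (i + 1))) = l (Set.Ico (t i) (t (i + 1))) := by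
    intro i hi
    rw [Finset.mem_range] at hi
    apply le_antisymm
    · calc l (Set.Icc (t i) (t (i + 1)))
          ≤ l (Set.Ico (t i) (t (i + 1)) ∪ {t (i + 1)}) := by
            apply measure_mono
            rw [Set.Ico_union_right (hmono i hi)]
        _ ≤ l (Set.Ico (t i) (t (i + 1))) + l {t (i + 1)} := measure_union_le _ _
        _ = l (Set.Ico (t i) (t (i + 1))) := by rw [hatom]; simp
    · exact measure_mono Set.Ico_subset_Icc_self
  have hdisj : (↑(Finset.range m) : Set ℕ).PairwiseDisjoint
      (fun i => Set.Ico (t i) (t (i + 1))) := by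
    intro i hi j hj hij
    simp only [Finset.coe_range, Set.mem_Iio] at hi hj
    have key : ∀ p q : ℕ, p < q → q < m → Disjoint (Set.Ico (t p) (t (p+1))) (Set.Ico (t q) (t (q+1))) := by
      intro p q hpq hqm
      have h1 : t (p + 1) ≤ t q := chain_mono' t m hmono (p+1) q (by omega) (by omega)
      rw [Set.disjoint_left]
      rintro x ⟨_, hx2⟩ ⟨hx3, _⟩
      exact absurd (lt_of_lt_of_le hx2 (le_trans h1 hx3)) (lt_irrefl x)
    rcases lt_or_gt_of_ne hij with hlt | hgt
    · exact key i j hlt hj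
    · exact (key j i hgt hi).symm
  have hUsub : (⋃ i ∈ Finset.range m, Set.Ico (t i) (t (i + 1))) ⊆ Set.Icc a b := by
    intro x hx
    rcases Set.mem_iUnion₂.mp hx with ⟨i, hi, hxi⟩
    exact hsub i (Finset.mem_range.mp hi) (Set.Ico_subset_Icc_self hxi)
  have hsum : ∑ i ∈ Finset.range m, l (Set.Ico (t i) (t (i + 1)))
      = l (⋃ i ∈ Finset.range m, Set.Ico (t i) (t (i + 1))) :=
    (measure_biUnion_finset hdisj (fun i _ => measurableSet_Ico)).symm
  have hfin2 : ∀ i ∈ Finset.range m, l (Set.Ico (t i) (t (i + 1))) ≠ ⊤ := by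
    intro i hi
    refine ne_top_of_le_ne_top hfin (measure_mono ?_)
    exact fun x hx => hsub i (Finset.mem_range.mp hi) (Set.Ico_subset_Icc_self hx)
  calc ∑ i ∈ Finset.range m, (l (Set.Icc (t i) (t (i + 1)))).toReal
      = ∑ i ∈ Finset.range m, (l (Set.Ico (t i) (t (i + 1)))).toReal := by
        exact Finset.sum_congr rfl (fun i hi => by rw [hIcoeq i hi])
    _ = (∑ i ∈ Finset.range m, l (Set.Ico (t i) (t (i + 1)))).toReal :=
        (ENNReal.toReal_sum hfin2).symm
    _ ≤ (l (Set.Icc a b)).toReal := by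
        rw [hsum]
        exact ENNReal.toReal_mono hfin (measure_mono hUsub)
    _ ≤ ((K : ℕ∞) * ENNReal.ofReal c).toReal :=
        ENNReal.toReal_mono (ENNReal.mul_ne_top (ENNReal.natCast_ne_top K) ENNReal.ofReal_ne_top)
          hIccbd
    _ = c * (K : ℝ) := by
        rw [ENNReal.toReal_mul, ENNReal.toReal_ofReal hc]
        simp [mul_comm]


lemma modulus_small {f : ℝ → ℝ} (hc : ContinuousOn f (Set.Ici 0))
    (hm : MonotoneOn f (Set.Ici 0)) (h0 : f 0 = 0) {ε : ℝ} (hε : 0 < ε) :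
    ∃ δ > 0, ∀ x, 0 ≤ x → x ≤ δ → f x ≤ ε := by
  have hcw : ContinuousWithinAt f (Set.Ici 0) 0 := hc 0 (Set.mem_Ici.2 le_rfl)
  rw [Metric.continuousWithinAt_iff] at hcw
  obtain ⟨δ', hδ', hball⟩ := hcw ε hε
  refine ⟨δ' / 2, by linarith, fun x hx0 hxδ => ?_⟩
  have hfd : f (δ' / 2) < ε := by
    have := hball (x := δ' / 2) (Set.mem_Ici.2 (by linarith)) (by
      rw [Real.dist_eq]; rw [abs_of_nonneg (by linarith)]; linarith)
    rw [Real.dist_eq, h0, sub_zero] at this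
    exact lt_of_le_of_lt (le_abs_self _) this
  exact le_trans (hm (Set.mem_Ici.2 hx0) (Set.mem_Ici.2 (by linarith)) hxδ) hfd.le

lemma exists_finite_net {E : Type*} [NormedAddCommGroup E] [NormedSpace ℝ E] [ProperSpace E]
    (D : Set E) (hD : Dense D) (R ε : ℝ) (hε : 0 < ε) :
    ∃ F : Set E, F.Finite ∧ F.Nonempty ∧ F ⊆ D ∧
      ∀ z : E, ‖z‖ ≤ R → ∃ d ∈ F, ‖z - d‖ < ε := by
  have hcomp : IsCompact (Metric.closedBall (0 : E) (max R 0)) := isCompact_closedBall _ _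
  have hcov : Metric.closedBall (0 : E) (max R 0) ⊆ ⋃ d ∈ D, Metric.ball d ε := by
    intro x _
    obtain ⟨d, hd1, hd2⟩ := Metric.dense_iff.mp hD x ε hε
    refine Set.mem_biUnion hd2 ?_
    rw [Metric.mem_ball, dist_comm]
    exact Metric.mem_ball.mp hd1
  obtain ⟨F0, hF0D, hF0fin, hF0cov⟩ :=
    hcomp.elim_finite_subcover_image (fun d _ => Metric.isOpen_ball) hcov
  refine ⟨F0 ∪ {Classical.choice (inferInstance : Nonempty E) |> fun e =>
    Classical.choose (Metric.dense_iff.mp hD e ε hε)}, ?_, ?_, ?_, ?_⟩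
  · exact hF0fin.union (Set.finite_singleton _)
  · exact Set.Nonempty.inr (Set.singleton_nonempty _)
  · refine Set.union_subset hF0D ?_
    intro d hd
    rw [Set.mem_singleton_iff] at hd
    subst hd
    exact (Classical.choose_spec (Metric.dense_iff.mp hD _ ε hε)).2
  · intro z hz
    have hzball : z ∈ Metric.closedBall (0 : E) (max R 0) := by
      rw [Metric.mem_closedBall, dist_zero_right]
      exact le_trans hz (le_max_left _ _)
    obtain ⟨d, hd, hdz⟩ := Set.mem_iUnion₂.mp (hF0cov hzball)
    refine ⟨d, Set.mem_union_left _ hd, ?_⟩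
    rw [← dist_eq_norm]
    exact Metric.mem_ball.mp hdz

-- sum grouping
lemma sum_range_mul_group {β : Type*} [AddCommMonoid β] (f : ℕ → β) (K M : ℕ) :
    ∑ i ∈ Finset.range (K * M), f i
      = ∑ k ∈ Finset.range K, ∑ r ∈ Finset.range M, f (k * M + r) := by
  induction K with
  | zero => simp
  | succ n ih =>
    rw [Finset.sum_range_succ, ← ih, Nat.succ_mul, Finset.sum_range_add]


set_option maxHeartbeats 1000000 in
theorem stmt10 {N : ℕ} (ω : ℕ → ℝ → ℝ) (hω : IsModulusFamily ω)
    (D : Set (EuclideanSpace ℝ (Fin N))) (hDc : D.Countable) (hDd : Dense D)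
    (Θ : ℕ → ℚ → ℚ → ℝ → ℝ) (hΘ : IsSuitableModuli Θ)
    (ν : ℕ → EuclideanSpace ℝ (Fin N) → Set ℝ → ℝ)
    (ν₀ : EuclideanSpace ℝ (Fin N) → Set ℝ → ℝ)
    (hν : ∀ n, IsParamBMeasure ω (ν n)) (hν₀ : IsParamBMeasure ω ν₀)
    (lB : ℕ → ℕ → Measure ℝ) (lB0 : ℕ → Measure ℝ)
    (hlB : ∀ n j, 1 ≤ j → HasLBound (ω j) (ν n) j (lB n j))
    (hlB0 : ∀ j, 1 ≤ j → HasLBound (ω j) ν₀ j (lB0 j))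
    (hlbd : ∀ j, 1 ≤ j → ∃ c > (0 : ℝ), ∀ t : ℝ,
      (∀ n, lB n j (Set.Icc t (t + 1)) ≤ ENNReal.ofReal c) ∧
      lB0 j (Set.Icc t (t + 1)) ≤ ENNReal.ofReal c)
    (hconv : ∀ y ∈ D, ∀ q₁ q₂ : ℚ, q₁ < q₂ →
      Tendsto (fun n => ν n y (Set.Icc (q₁ : ℝ) (q₂ : ℝ))) atTop
        (𝓝 (ν₀ y (Set.Icc (q₁ : ℝ) (q₂ : ℝ))))) :
    SigmaThetaTendsto Θ ν ν₀ := by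
  intro j q₁ q₂ hq ε hε
  have hqR : (q₁ : ℝ) < (q₂ : ℝ) := by exact_mod_cast hq
  set T : ℝ := (q₂ : ℝ) - (q₁ : ℝ) with hTdef
  have hT : 0 < T := by rw [hTdef]; linarith
  set j' : ℕ := j + 1 with hj'def
  have hj'1 : 1 ≤ j' := by omega
  have hj'R : ((j' : ℕ) : ℝ) = (j : ℝ) + 1 := by push_cast [hj'def]; ring
  obtain ⟨c, hc, hct⟩ := hlbd j' hj'1
  set Kc : ℕ := ⌈T⌉₊ with hKcdef
  have hKc1 : 1 ≤ Kc := by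
    rw [hKcdef]
    exact Nat.one_le_iff_ne_zero.2 (by rw [← Nat.pos_iff_ne_zero, Nat.ceil_pos]; exact hT)
  have hKcR : (1 : ℝ) ≤ (Kc : ℝ) := by exact_mod_cast hKc1
  have hcKc : (0 : ℝ) < c * Kc := by nlinarith
  set ε5 : ℝ := ε / 5 with hε5def
  have hε5pos : 0 < ε5 := by positivity
  set εC : ℝ := ε / (5 * (c * Kc + 1)) with hεCdef
  have hεCpos : 0 < εC := by rw [hεCdef]; positivity
  obtain ⟨δω, hδω, hδωsmall⟩ := modulus_small (hω.continuousOn j') (hω.monotoneOn j')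
    (hω.map_zero j') hεCpos
  obtain ⟨η, hη, hηsmall⟩ := modulus_small (hΘ.continuousOn j q₁ q₂ hq)
    (hΘ.monotoneOn j q₁ q₂ hq) (hΘ.map_zero j q₁ q₂ hq) (half_pos hδω)
  set ε' : ℝ := min (δω / 2) 1 with hε'def
  have hε'pos : 0 < ε' := lt_min (half_pos hδω) one_pos
  obtain ⟨F, hFfin, hFne, hFD, hFnet⟩ := exists_finite_net D hDd (j : ℝ) ε' hε'pos
  -- rational grid
  set K' : ℕ := ⌈T / η⌉₊ + 1 with hK'def
  have hK'pos : 0 < K' := by omega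
  have hK'R : (0 : ℝ) < (K' : ℝ) := by exact_mod_cast hK'pos
  have hwidth : T / K' < η := by
    rw [div_lt_iff₀ hK'R]
    have h1 : T / η < (K' : ℝ) := by
      rw [hK'def]
      push_cast
      exact lt_of_le_of_lt (Nat.le_ceil _) (by linarith)
    calc T = (T / η) * η := by field_simp
      _ < (K' : ℝ) * η := by
          exact mul_lt_mul_of_pos_right h1 hη
      _ = η * K' := by ring
  set rr : ℕ → ℚ := fun k => q₁ + (k : ℚ) * (q₂ - q₁) / (K' : ℚ) with hrrdef
  have hrrcast : ∀ k : ℕ, ((rr k : ℚ) : ℝ) = (q₁ : ℝ) + (k : ℝ) * T / (K' : ℝ) := by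
    intro k
    rw [hrrdef, hTdef]
    push_cast
    ring
  have hrrlt : ∀ k : ℕ, rr k < rr (k + 1) := by
    intro k
    have : ((rr k : ℚ) : ℝ) < ((rr (k + 1) : ℚ) : ℝ) := by
      rw [hrrcast, hrrcast]
      have hcast : ((k + 1 : ℕ) : ℝ) = (k : ℝ) + 1 := by push_cast; ring
      rw [hcast]
      have h0 : 0 < T / (K' : ℝ) := div_pos hT hK'R
      have he : ((k : ℝ) + 1) * T / (K' : ℝ) - (k : ℝ) * T / (K' : ℝ) = T / (K' : ℝ) := by
        ring
      linarith
    exact_mod_cast this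
  set ε5K : ℝ := ε / (5 * K') with hε5Kdef
  have hε5Kpos : 0 < ε5K := by rw [hε5Kdef]; positivity
  have hev : ∀ᶠ n in atTop, ∀ d ∈ F, ∀ k ∈ Finset.range K',
      |ν n d (Set.Icc ((rr k : ℚ) : ℝ) ((rr (k + 1) : ℚ) : ℝ)) -
        ν₀ d (Set.Icc ((rr k : ℚ) : ℝ) ((rr (k + 1) : ℚ) : ℝ))| < ε5K := by
    rw [Filter.eventually_all_finite hFfin]
    intro d hd
    rw [Filter.eventually_all_finset]
    intro k _
    have htd := hconv d (hFD hd) (rr k) (rr (k + 1)) (hrrlt k)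
    have hball := htd (Metric.ball_mem_nhds _ hε5Kpos)
    filter_upwards [hball] with n hn
    simpa [Real.dist_eq] using hn
  obtain ⟨n₀, hn₀⟩ := Filter.eventually_atTop.mp hev
  refine ⟨n₀, ?_⟩
  intro n hn y hy L L₀ hL hL₀
  obtain ⟨hycont, hybd, hymod⟩ := hy
  obtain ⟨δ1, hδ1, hP1⟩ := hL ε5 hε5pos
  obtain ⟨δ2, hδ2, hP2⟩ := hL₀ ε5 hε5pos
  set δ : ℝ := min δ1 δ2 with hδdef
  have hδpos : 0 < δ := lt_min hδ1 hδ2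
  set M : ℕ := ⌈T / (K' * δ)⌉₊ + 1 with hMdef
  have hMpos : 0 < M := by omega
  have hMR : (0 : ℝ) < (M : ℝ) := by exact_mod_cast hMpos
  set KM : ℕ := K' * M with hKMdef
  have hKMpos : 0 < KM := Nat.mul_pos hK'pos hMpos
  have hKMR : (0 : ℝ) < (KM : ℝ) := by exact_mod_cast hKMpos
  have hKMcast : (KM : ℝ) = (K' : ℝ) * (M : ℝ) := by rw [hKMdef]; push_cast; ring
  set hstep : ℝ := T / (KM : ℝ) with hstepdef
  have hsteppos : 0 < hstep := by rw [hstepdef]; positivity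
  have hstepδ : hstep < δ := by
    rw [hstepdef, div_lt_iff₀ hKMR]
    have h1 : T / ((K' : ℝ) * δ) < (M : ℝ) := by
      rw [hMdef]
      push_cast
      exact lt_of_le_of_lt (Nat.le_ceil _) (by linarith)
    have h2 : (0 : ℝ) < (K' : ℝ) * δ := by positivity
    calc T = (T / ((K' : ℝ) * δ)) * ((K' : ℝ) * δ) := by field_simp
      _ < (M : ℝ) * ((K' : ℝ) * δ) := mul_lt_mul_of_pos_right h1 h2
      _ = δ * (KM : ℝ) := by rw [hKMcast]; ring
  set tt : ℕ → ℝ := fun i => (q₁ : ℝ) + (i : ℝ) * hstep with httdef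
  have httapp : ∀ i : ℕ, tt i = (q₁ : ℝ) + (i : ℝ) * hstep := fun i => rfl
  have httstep : ∀ i : ℕ, tt (i + 1) - tt i = hstep := by
    intro i
    rw [httapp, httapp]
    push_cast
    ring
  have httlt : ∀ i : ℕ, tt i < tt (i + 1) := by
    intro i
    have := httstep i
    linarith
  have httmono : ∀ i < KM, tt i ≤ tt (i + 1) := fun i _ => (httlt i).le
  have httle : ∀ p q : ℕ, p ≤ q → tt p ≤ tt q := by
    intro p q hpq
    rw [httapp, httapp]
    have h1 : (p : ℝ) ≤ (q : ℝ) := by exact_mod_cast hpq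
    have h2 := mul_le_mul_of_nonneg_right h1 hsteppos.le
    linarith
  have httKM : tt KM = (q₂ : ℝ) := by
    rw [httapp, hstepdef]
    rw [mul_comm, div_mul_cancel₀ T hKMR.ne']
    rw [hTdef]
    ring
  have httmem : ∀ i ≤ KM, tt i ∈ Set.Icc (q₁ : ℝ) (q₂ : ℝ) := by
    intro i hi
    constructor
    · rw [httapp]
      have : (0:ℝ) ≤ (i : ℝ) * hstep := by positivity
      linarith
    · rw [← httKM]
      exact httle i KM hi
  have httkM : ∀ k : ℕ, tt (k * M) = (q₁ : ℝ) + (k : ℝ) * T / (K' : ℝ) := by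
    intro k
    rw [httapp, hstepdef, hKMcast]
    have h1 : ((k * M : ℕ) : ℝ) = (k : ℝ) * (M : ℝ) := by push_cast; ring
    rw [h1]
    have h2 : (k : ℝ) * (M : ℝ) * (T / ((K' : ℝ) * (M : ℝ))) = (k : ℝ) * T / (K' : ℝ) := by
      field_simp
    rw [h2]
  have hrrtt : ∀ k : ℕ, ((rr k : ℚ) : ℝ) = tt (k * M) := by
    intro k
    rw [hrrcast, httkM]
  -- the tagged partition
  let P : TaggedPartition (q₁ : ℝ) (q₂ : ℝ) :=
    ⟨KM, hKMpos, tt, tt, by rw [httapp]; push_cast; ring, httKM, fun i _ => httlt i,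
      fun i _ => ⟨le_rfl, (httlt i).le⟩⟩
  have hmesh1 : P.MeshLT δ1 := by
    intro i _
    show tt (i + 1) - tt i < δ1
    rw [httstep]
    exact lt_of_lt_of_le hstepδ (min_le_left _ _)
  have hmesh2 : P.MeshLT δ2 := by
    intro i _
    show tt (i + 1) - tt i < δ2
    rw [httstep]
    exact lt_of_lt_of_le hstepδ (min_le_right _ _)
  have hLS1 := hP1 P hmesh1
  have hLS4 := hP2 P hmesh2
  -- choose net points
  have hdk0 : ∀ k : ℕ, ∃ d, d ∈ F ∧ (k < K' → ‖y ((rr k : ℚ) : ℝ) - d‖ < ε') := by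
    intro k
    by_cases hk : k < K'
    · have hmem : ((rr k : ℚ) : ℝ) ∈ Set.Icc (q₁ : ℝ) (q₂ : ℝ) := by
        rw [hrrtt]
        exact httmem (k * M) (by rw [hKMdef]; exact Nat.mul_le_mul_right M hk.le)
      obtain ⟨d, hd, hdz⟩ := hFnet (y ((rr k : ℚ) : ℝ)) (hybd _ hmem)
      exact ⟨d, hd, fun _ => hdz⟩
    · obtain ⟨d, hd⟩ := hFne
      exact ⟨d, hd, fun h => absurd h hk⟩
  choose dk hdkF hdknear using hdk0
  have hdknorm : ∀ k < K', ‖dk k‖ ≤ (j' : ℝ) := by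
    intro k hk
    have h1 : ‖dk k‖ = ‖y ((rr k : ℚ) : ℝ) - (y ((rr k : ℚ) : ℝ) - dk k)‖ := by
      rw [sub_sub_cancel]
    rw [h1, hj'R]
    have hmem : ((rr k : ℚ) : ℝ) ∈ Set.Icc (q₁ : ℝ) (q₂ : ℝ) := by
      rw [hrrtt]
      exact httmem (k * M) (by rw [hKMdef]; exact Nat.mul_le_mul_right M hk.le)
    have h2 := norm_sub_le (y ((rr k : ℚ) : ℝ)) (y ((rr k : ℚ) : ℝ) - dk k)
    have h3 := hybd _ hmem
    have h4 := (hdknear k hk).le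
    have h5 : ε' ≤ 1 := min_le_right _ _
    linarith
  -- per-piece closeness of parameters
  have hparam : ∀ i < KM, ‖y (tt i) - dk (i / M)‖ ≤ δω := by
    intro i hi
    set k := i / M with hkdef
    set r := i % M with hrdef
    have hir : i = k * M + r := by
      rw [hkdef, hrdef, Nat.mul_comm]
      exact (Nat.div_add_mod i M).symm
    have hrM : r < M := by rw [hrdef]; exact Nat.mod_lt i hMpos
    have hkK : k < K' := by
      rw [hkdef, Nat.div_lt_iff_lt_mul hMpos]
      rw [hKMdef] at hi
      exact Nat.lt_of_lt_of_le hi (by rw [Nat.mul_comm])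
    have himem : i ≤ KM := hi.le
    have hd1 : tt i - ((rr k : ℚ) : ℝ) = (r : ℝ) * hstep := by
      rw [hrrtt k, hir, httapp, httapp]
      push_cast
      ring
    have hd2 : (0:ℝ) ≤ tt i - ((rr k : ℚ) : ℝ) := by
      rw [hd1]; positivity
    have hd3 : tt i - ((rr k : ℚ) : ℝ) ≤ T / K' := by
      rw [hd1]
      have h1 : (r : ℝ) ≤ (M : ℝ) := by exact_mod_cast hrM.le
      have h2 : (M : ℝ) * hstep = T / K' := by
        rw [hstepdef, hKMcast]
        rw [mul_div_assoc']
        rw [mul_comm (K' : ℝ) (M : ℝ), mul_div_mul_left _ _ hMR.ne']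
      calc (r : ℝ) * hstep ≤ (M : ℝ) * hstep :=
            mul_le_mul_of_nonneg_right h1 hsteppos.le
        _ = T / K' := h2
    have hmem1 : tt i ∈ Set.Icc (q₁ : ℝ) (q₂ : ℝ) := httmem i himem
    have hmem2 : ((rr k : ℚ) : ℝ) ∈ Set.Icc (q₁ : ℝ) (q₂ : ℝ) := by
      rw [hrrtt]
      exact httmem (k * M) (by rw [hKMdef]; exact Nat.mul_le_mul_right M hkK.le)
    have hθ : ‖y (tt i) - y ((rr k : ℚ) : ℝ)‖ ≤ δω / 2 := by
      have hmod := hymod (tt i) hmem1 ((rr k : ℚ) : ℝ) hmem2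
      have habs : |tt i - ((rr k : ℚ) : ℝ)| = tt i - ((rr k : ℚ) : ℝ) := abs_of_nonneg hd2
      refine le_trans hmod ?_
      apply hηsmall
      · rw [habs]; exact hd2
      · rw [habs]; exact le_trans hd3 hwidth.le
    have hnet : ‖y ((rr k : ℚ) : ℝ) - dk k‖ ≤ δω / 2 := by
      have := (hdknear k hkK).le
      have h5 : ε' ≤ δω / 2 := min_le_left _ _
      linarith
    calc ‖y (tt i) - dk k‖
        ≤ ‖y (tt i) - y ((rr k : ℚ) : ℝ)‖ + ‖y ((rr k : ℚ) : ℝ) - dk k‖ := by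
          have := norm_sub_le_norm_sub_add_norm_sub (y (tt i)) (y ((rr k : ℚ) : ℝ)) (dk k)
          exact this
      _ ≤ δω / 2 + δω / 2 := add_le_add hθ hnet
      _ = δω := by ring
  -- abbreviations
  set A : ℕ → Set ℝ := fun i => Set.Icc (tt i) (tt (i + 1)) with hAdef
  have hAbd : ∀ i, Bornology.IsBounded (A i) := fun i => Metric.isBounded_Icc _ _
  have hAms : ∀ i, MeasurableSet (A i) := fun i => measurableSet_Icc
  have hAsub : ∀ i < KM, A i ⊆ Set.Icc (q₁ : ℝ) (q₂ : ℝ) := by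
    intro i hi
    rw [hAdef]
    exact Set.Icc_subset_Icc (httmem i hi.le).1 (httmem (i + 1) (by omega)).2
  set S1 : ℝ := ∑ i ∈ Finset.range KM, ν n (y (tt i)) (A i) with hS1def
  set S2 : ℝ := ∑ i ∈ Finset.range KM, ν n (dk (i / M)) (A i) with hS2def
  set S3 : ℝ := ∑ i ∈ Finset.range KM, ν₀ (dk (i / M)) (A i) with hS3def
  set S4 : ℝ := ∑ i ∈ Finset.range KM, ν₀ (y (tt i)) (A i) with hS4def
  have hRS1 : RiemannSum (ν n) y P = S1 := by rw [hS1def]; rfl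
  have hRS4 : RiemannSum ν₀ y P = S4 := by rw [hS4def]; rfl
  -- (a) |S1 - S2| bound
  have hyt_norm : ∀ i ≤ KM, ‖y (tt i)‖ ≤ (j' : ℝ) := by
    intro i hi
    rw [hj'R]
    have := hybd (tt i) (httmem i hi)
    linarith
  have hsuml_n : ∑ i ∈ Finset.range KM, ((lB n j') (A i)).toReal ≤ c * (Kc : ℝ) := by
    have := sum_measure_Icc_le (lB n j') ((hlB n j' hj'1).1.2) c hc.le
      (fun s => (hct s).1 n) (q₁ : ℝ) (q₂ : ℝ) hqR tt KM httmono hAsub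
    simpa [← hTdef, ← hKcdef] using this
  have hsuml_0 : ∑ i ∈ Finset.range KM, ((lB0 j') (A i)).toReal ≤ c * (Kc : ℝ) := by
    have := sum_measure_Icc_le (lB0 j') ((hlB0 j' hj'1).1.2) c hc.le
      (fun s => (hct s).2) (q₁ : ℝ) (q₂ : ℝ) hqR tt KM httmono hAsub
    simpa [← hTdef, ← hKcdef] using this
  have hεCfin : εC * (c * (Kc : ℝ)) < ε5 := by
    rw [hεCdef, hε5def]
    rw [div_mul_eq_mul_div, div_lt_div_iff₀ (by positivity) (by norm_num)]
    nlinarith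
  have ha : |S1 - S2| < ε5 := by
    have hterm : ∀ i ∈ Finset.range KM,
        |ν n (y (tt i)) (A i) - ν n (dk (i / M)) (A i)| ≤ εC * ((lB n j') (A i)).toReal := by
      intro i hi
      rw [Finset.mem_range] at hi
      have hkK : i / M < K' := by
        rw [Nat.div_lt_iff_lt_mul hMpos]
        rw [hKMdef] at hi
        exact Nat.lt_of_lt_of_le hi (by rw [Nat.mul_comm])
      have hdiff := (hlB n j' hj'1).2 (y (tt i)) (dk (i / M)) (hyt_norm i hi.le)
        (hdknorm (i / M) hkK)
      have h1 := diffLE_single hdiff (hAbd i) (hAms i)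
      refine le_trans h1 ?_
      apply mul_le_mul_of_nonneg_right ?_ ENNReal.toReal_nonneg
      exact hδωsmall _ (norm_nonneg _) (hparam i hi)
    calc |S1 - S2| = |∑ i ∈ Finset.range KM,
          (ν n (y (tt i)) (A i) - ν n (dk (i / M)) (A i))| := by
          rw [hS1def, hS2def, Finset.sum_sub_distrib]
      _ ≤ ∑ i ∈ Finset.range KM, |ν n (y (tt i)) (A i) - ν n (dk (i / M)) (A i)| :=
          Finset.abs_sum_le_sum_abs _ _
      _ ≤ ∑ i ∈ Finset.range KM, εC * ((lB n j') (A i)).toReal := Finset.sum_le_sum hterm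
      _ = εC * ∑ i ∈ Finset.range KM, ((lB n j') (A i)).toReal := by rw [Finset.mul_sum]
      _ ≤ εC * (c * (Kc : ℝ)) := mul_le_mul_of_nonneg_left hsuml_n hεCpos.le
      _ < ε5 := hεCfin
  have hd : |S3 - S4| < ε5 := by
    have hterm : ∀ i ∈ Finset.range KM,
        |ν₀ (dk (i / M)) (A i) - ν₀ (y (tt i)) (A i)| ≤ εC * ((lB0 j') (A i)).toReal := by
      intro i hi
      rw [Finset.mem_range] at hi
      have hkK : i / M < K' := by
        rw [Nat.div_lt_iff_lt_mul hMpos]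
        rw [hKMdef] at hi
        exact Nat.lt_of_lt_of_le hi (by rw [Nat.mul_comm])
      have hdiff := (hlB0 j' hj'1).2 (dk (i / M)) (y (tt i)) (hdknorm (i / M) hkK)
        (hyt_norm i hi.le)
      have h1 := diffLE_single hdiff (hAbd i) (hAms i)
      refine le_trans h1 ?_
      apply mul_le_mul_of_nonneg_right ?_ ENNReal.toReal_nonneg
      have : ‖dk (i / M) - y (tt i)‖ = ‖y (tt i) - dk (i / M)‖ := norm_sub_rev _ _
      rw [this]
      exact hδωsmall _ (norm_nonneg _) (hparam i hi)
    calc |S3 - S4| = |∑ i ∈ Finset.range KM,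
          (ν₀ (dk (i / M)) (A i) - ν₀ (y (tt i)) (A i))| := by
          rw [hS3def, hS4def, Finset.sum_sub_distrib]
      _ ≤ ∑ i ∈ Finset.range KM, |ν₀ (dk (i / M)) (A i) - ν₀ (y (tt i)) (A i)| :=
          Finset.abs_sum_le_sum_abs _ _
      _ ≤ ∑ i ∈ Finset.range KM, εC * ((lB0 j') (A i)).toReal := Finset.sum_le_sum hterm
      _ = εC * ∑ i ∈ Finset.range KM, ((lB0 j') (A i)).toReal := by rw [Finset.mul_sum]
      _ ≤ εC * (c * (Kc : ℝ)) := mul_le_mul_of_nonneg_left hsuml_0 hεCpos.le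
      _ < ε5 := hεCfin
  -- (b) |S2 - S3| bound via telescoping
  have hdiv : ∀ k < K', ∀ r < M, (k * M + r) / M = k := by
    intro k _ r hr
    rw [Nat.mul_comm k M, Nat.mul_add_div hMpos, Nat.div_eq_of_lt hr]
    omega
  have htele : ∀ (μ : Set ℝ → ℝ), IsBMeasure μ → ∀ k < K',
      ∑ r ∈ Finset.range M, μ (A (k * M + r)) =
        μ (Set.Icc ((rr k : ℚ) : ℝ) ((rr (k + 1) : ℚ) : ℝ)) := by
    intro μ hμ k hk
    have hchain := bmeasure_chain hμ (fun r => tt (k * M + r)) M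
      (fun r _ => (httlt (k * M + r)).le)
    have e1 : tt (k * M + 0) = ((rr k : ℚ) : ℝ) := by rw [Nat.add_zero, hrrtt k]
    have e2 : tt (k * M + M) = ((rr (k + 1) : ℚ) : ℝ) := by
      rw [hrrtt (k + 1)]
      congr 1
      ring
    calc ∑ r ∈ Finset.range M, μ (A (k * M + r))
        = μ (Set.Icc (tt (k * M + 0)) (tt (k * M + M))) := by
          rw [← hchain]
          exact Finset.sum_congr rfl (fun r _ => rfl)
      _ = μ (Set.Icc ((rr k : ℚ) : ℝ) ((rr (k + 1) : ℚ) : ℝ)) := by rw [e1, e2]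
  have hb : |S2 - S3| < ε5 := by
    have hS2g : S2 = ∑ k ∈ Finset.range K', ν n (dk k)
        (Set.Icc ((rr k : ℚ) : ℝ) ((rr (k + 1) : ℚ) : ℝ)) := by
      rw [hS2def, hKMdef, sum_range_mul_group]
      refine Finset.sum_congr rfl (fun k hk => ?_)
      rw [Finset.mem_range] at hk
      have h1 : ∀ r ∈ Finset.range M, ν n (dk ((k * M + r) / M)) (A (k * M + r))
          = ν n (dk k) (A (k * M + r)) := by
        intro r hr
        rw [hdiv k hk r (Finset.mem_range.mp hr)]
      rw [Finset.sum_congr rfl h1, htele (ν n (dk k)) ((hν n).1 (dk k)) k hk]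
    have hS3g : S3 = ∑ k ∈ Finset.range K', ν₀ (dk k)
        (Set.Icc ((rr k : ℚ) : ℝ) ((rr (k + 1) : ℚ) : ℝ)) := by
      rw [hS3def, hKMdef, sum_range_mul_group]
      refine Finset.sum_congr rfl (fun k hk => ?_)
      rw [Finset.mem_range] at hk
      have h1 : ∀ r ∈ Finset.range M, ν₀ (dk ((k * M + r) / M)) (A (k * M + r))
          = ν₀ (dk k) (A (k * M + r)) := by
        intro r hr
        rw [hdiv k hk r (Finset.mem_range.mp hr)]
      rw [Finset.sum_congr rfl h1, htele (ν₀ (dk k)) (hν₀.1 (dk k)) k hk]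
    have hKne : (Finset.range K').Nonempty := Finset.nonempty_range_iff.2 (by omega)
    calc |S2 - S3| = |∑ k ∈ Finset.range K', (ν n (dk k)
          (Set.Icc ((rr k : ℚ) : ℝ) ((rr (k + 1) : ℚ) : ℝ)) - ν₀ (dk k)
          (Set.Icc ((rr k : ℚ) : ℝ) ((rr (k + 1) : ℚ) : ℝ)))| := by
          rw [hS2g, hS3g, Finset.sum_sub_distrib]
      _ ≤ ∑ k ∈ Finset.range K', |ν n (dk k)
          (Set.Icc ((rr k : ℚ) : ℝ) ((rr (k + 1) : ℚ) : ℝ)) - ν₀ (dk k)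
          (Set.Icc ((rr k : ℚ) : ℝ) ((rr (k + 1) : ℚ) : ℝ))| :=
          Finset.abs_sum_le_sum_abs _ _
      _ < ∑ k ∈ Finset.range K', ε5K := by
          refine Finset.sum_lt_sum_of_nonempty hKne (fun k hk => ?_)
          exact hn₀ n hn (dk k) (hdkF k) k hk
      _ = (K' : ℝ) * ε5K := by rw [Finset.sum_const, Finset.card_range, nsmul_eq_mul]
      _ = ε5 := by
          rw [hε5Kdef, hε5def]
          field_simp
  -- final assembly
  rw [hRS1] at hLS1
  rw [hRS4] at hLS4
  have habs : |L - L₀| ≤ |L - S1| + |S1 - S2| + |S2 - S3| + |S3 - S4| + |S4 - L₀| := by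
    have e : L - L₀ = (L - S1) + (S1 - S2) + (S2 - S3) + (S3 - S4) + (S4 - L₀) := by ring
    rw [e]
    calc |(L - S1) + (S1 - S2) + (S2 - S3) + (S3 - S4) + (S4 - L₀)|
        ≤ |(L - S1) + (S1 - S2) + (S2 - S3) + (S3 - S4)| + |S4 - L₀| := abs_add_le _ _
      _ ≤ |(L - S1) + (S1 - S2) + (S2 - S3)| + |S3 - S4| + |S4 - L₀| := by
          gcongr
          exact abs_add_le _ _
      _ ≤ |(L - S1) + (S1 - S2)| + |S2 - S3| + |S3 - S4| + |S4 - L₀| := by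
          gcongr
          exact abs_add_le _ _
      _ ≤ |L - S1| + |S1 - S2| + |S2 - S3| + |S3 - S4| + |S4 - L₀| := by
          gcongr
          exact abs_add_le _ _
  have hS4L : |S4 - L₀| < ε5 := by
    rw [abs_sub_comm]
    exact hLS4
  have : |L - L₀| < 5 * ε5 := by linarith
  rw [hε5def] at this
  linarith
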